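/- There is an absolute constant c > 0 such that: for every prime p, every kernel K : F_p × F_p → ℂ with |K(x,y)| ≤ 1 for all x, y, and all f₁, f₂ : F_p → ℂ, one has ( Σ_{s ∈ F_p} | Σ_{n ∈ F_p, n ≠ 0} f̂₁(s − n) · f̂₂(n) · K(s − n, n) |² )^(1/2) ≤ c · Ω^(1/5) · ‖f₁‖₂ · ‖f₂‖₂, where Ω = ( Σ_{s,u,v ∈ F_p} | Σ_{x ∈ F_p} K(x, s − x) · conj(K(x + u, s − x)) · conj(K(x, s + v − x)) · K(x + u, s + v − x) |² )^(1/2). -/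

import Mathlib

open Finset Complex ComplexConjugate

/-- `e_p(x) = exp(2πi x / p)` for `x : ZMod p`. -/
noncomputable def ep (p : ℕ) [NeZero p] (x : ZMod p) : ℂ :=
  Complex.exp (2 * (Real.pi : ℂ) * Complex.I * (x.val : ℂ) / (p : ℂ))

/-- Normalized L²-norm. -/
noncomputable def nrm2 (p : ℕ) [NeZero p] (f : ZMod p → ℂ) : ℝ :=
  Real.sqrt ((1 / (p : ℝ)) * ∑ x : ZMod p, ‖f x‖ ^ 2)

/-- Fourier transform `f̂(z) = (1/p) Σ_x e_p(-xz) f(x)`. -/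
noncomputable def ft (p : ℕ) [NeZero p] (f : ZMod p → ℂ) (z : ZMod p) : ℂ :=
  (1 / (p : ℂ)) * ∑ x : ZMod p, ep p (-(x * z)) * f x

/-- The quantity Ω associated to a kernel K. -/
noncomputable def bigOmega (p : ℕ) [NeZero p] (K : ZMod p → ZMod p → ℂ) : ℝ :=
  (∑ s : ZMod p, ∑ u : ZMod p, ∑ v : ZMod p,
    ‖∑ x : ZMod p,
      K x (s - x) * star (K (x + u) (s - x)) * star (K x (s + v - x)) *
        K (x + u) (s + v - x)‖ ^ 2) ^ ((1 : ℝ) / 2)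

/-! ### Auxiliary: characters and Parseval -/

section aux
variable (p : ℕ) [NeZero p]

lemma ep_eq_pow (x : ZMod p) :
    ep p x = Complex.exp (2 * (Real.pi : ℂ) * Complex.I / p) ^ x.val := by
  rw [ep, ← Complex.exp_nat_mul]
  congr 1
  ring

lemma zeta_pow_p : Complex.exp (2 * (Real.pi : ℂ) * Complex.I / p) ^ p = 1 := by
  rw [← Complex.exp_nat_mul]
  have hp : (p : ℂ) ≠ 0 := Nat.cast_ne_zero.2 (NeZero.ne p)
  rw [show (p : ℂ) * (2 * (Real.pi : ℂ) * Complex.I / p) = 2 * Real.pi * Complex.I by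
    field_simp]
  exact Complex.exp_two_pi_mul_I

lemma zeta_pow_mod (m : ℕ) :
    Complex.exp (2 * (Real.pi : ℂ) * Complex.I / p) ^ (m % p) =
      Complex.exp (2 * (Real.pi : ℂ) * Complex.I / p) ^ m := by
  conv_rhs => rw [← Nat.div_add_mod m p]
  rw [pow_add, pow_mul, zeta_pow_p, one_pow, one_mul]

lemma ep_add (a b : ZMod p) : ep p (a + b) = ep p a * ep p b := by
  rw [ep_eq_pow, ep_eq_pow, ep_eq_pow, ← pow_add, ZMod.val_add, zeta_pow_mod]

lemma ep_zero : ep p 0 = 1 := by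
  simp [ep]

lemma abs_ep (a : ZMod p) : ‖ep p a‖ = 1 := by
  rw [ep, show 2 * (Real.pi : ℂ) * Complex.I * ((a.val : ℕ) : ℂ) / p
      = ((2 * Real.pi * a.val / p : ℝ) : ℂ) * Complex.I by push_cast; ring,
    Complex.norm_exp_ofReal_mul_I]

lemma ep_conj (a : ZMod p) : conj (ep p a) = ep p (-a) := by
  have h : ep p a * ep p (-a) = 1 := by
    rw [← ep_add]
    simp [ep_zero]
  have hn : conj (ep p a) * ep p a = 1 := by
    rw [mul_comm, Complex.mul_conj]
    norm_cast
    rw [Complex.normSq_eq_norm_sq, abs_ep]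
    norm_num
  calc conj (ep p a) = conj (ep p a) * (ep p a * ep p (-a)) := by rw [h, mul_one]
    _ = (conj (ep p a) * ep p a) * ep p (-a) := by ring
    _ = ep p (-a) := by rw [hn, one_mul]

lemma sum_ep_mul (hp : p.Prime) (c : ZMod p) :
    ∑ z : ZMod p, ep p (c * z) = if c = 0 then (p : ℂ) else 0 := by
  split_ifs with hc
  · subst hc
    simp [ep_zero, card_univ]
  · haveI : Fact p.Prime := ⟨hp⟩
    have h1 : ∑ z : ZMod p, ep p (c * z) = ∑ z : ZMod p, ep p z :=
      Fintype.sum_equiv (Equiv.mulLeft₀ c hc) _ _ (fun z => rfl)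
    rw [h1]
    have h2 : ∑ z : ZMod p, ep p z
        = ∑ k ∈ range p, Complex.exp (2 * (Real.pi : ℂ) * Complex.I / p) ^ k := by
      simp_rw [ep_eq_pow]
      refine Finset.sum_nbij' (fun z => z.val) (fun k => (k : ZMod p)) ?_ ?_ ?_ ?_ ?_
      · intro a _; exact mem_range.2 (ZMod.val_lt a)
      · intro b _; exact mem_univ _
      · intro a _; exact ZMod.natCast_rightInverse a
      · intro b hb; exact ZMod.val_cast_of_lt (mem_range.1 hb)
      · intro a _; rfl
    rw [h2]
    have hprim := Complex.isPrimitiveRoot_exp p hp.ne_zero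
    exact hprim.geom_sum_eq_zero hp.one_lt

lemma parseval (hp : p.Prime) (f : ZMod p → ℂ) :
    ∑ z : ZMod p, ‖ft p f z‖ ^ 2 = nrm2 p f ^ 2 := by
  have hpC : (p : ℂ) ≠ 0 := Nat.cast_ne_zero.2 (NeZero.ne p)
  have key : ∑ z : ZMod p, ft p f z * conj (ft p f z)
      = (1 / (p : ℂ)) * ∑ x : ZMod p, f x * conj (f x) := by
    have expand : ∀ z : ZMod p, ft p f z * conj (ft p f z)
        = (1 / (p : ℂ)) ^ 2 * ∑ x : ZMod p, ∑ y : ZMod p,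
            (f x * conj (f y)) * ep p ((y - x) * z) := by
      intro z
      rw [ft, map_mul, map_sum]
      have hc1 : conj (1 / (p : ℂ)) = 1 / (p : ℂ) := by
        rw [map_div₀, map_one, Complex.conj_natCast]
      rw [hc1]
      rw [show (1 / (p:ℂ) * ∑ x : ZMod p, ep p (-(x * z)) * f x) *
            (1 / (p:ℂ) * ∑ y : ZMod p, conj (ep p (-(y * z)) * f y))
          = (1 / (p:ℂ))^2 * ((∑ x : ZMod p, ep p (-(x * z)) * f x) *
            (∑ y : ZMod p, conj (ep p (-(y * z)) * f y))) by ring]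
      rw [Finset.sum_mul_sum]
      congr 1
      refine Finset.sum_congr rfl fun x _ => Finset.sum_congr rfl fun y _ => ?_
      rw [map_mul, ep_conj]
      have h : ep p (-(x * z)) * ep p (-(-(y * z))) = ep p ((y - x) * z) := by
        rw [← ep_add]
        congr 1
        ring
      calc ep p (-(x * z)) * f x * (ep p (-(-(y * z))) * conj (f y))
          = (f x * conj (f y)) * (ep p (-(x * z)) * ep p (-(-(y * z)))) := by ring
        _ = (f x * conj (f y)) * ep p ((y - x) * z) := by rw [h]
    calc ∑ z : ZMod p, ft p f z * conj (ft p f z)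
        = (1 / (p : ℂ))^2 * ∑ z : ZMod p, ∑ x : ZMod p, ∑ y : ZMod p,
            (f x * conj (f y)) * ep p ((y - x) * z) := by
          rw [Finset.mul_sum]
          exact Finset.sum_congr rfl fun z _ => expand z
      _ = (1 / (p : ℂ))^2 * ∑ x : ZMod p, ∑ y : ZMod p,
            (f x * conj (f y)) * ∑ z : ZMod p, ep p ((y - x) * z) := by
          congr 1
          rw [Finset.sum_comm]
          refine Finset.sum_congr rfl fun x _ => ?_
          rw [Finset.sum_comm]
          exact Finset.sum_congr rfl fun y _ => (Finset.mul_sum _ _ _).symm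
      _ = (1 / (p : ℂ))^2 * ∑ x : ZMod p, (f x * conj (f x)) * (p : ℂ) := by
          congr 1
          refine Finset.sum_congr rfl fun x _ => ?_
          rw [Finset.sum_eq_single x]
          · rw [sum_ep_mul p hp, if_pos (by ring)]
          · intro y _ hyx
            rw [sum_ep_mul p hp, if_neg (by simpa [sub_eq_zero] using hyx), mul_zero]
          · intro h; exact absurd (mem_univ x) h
      _ = (1 / (p : ℂ)) * ∑ x : ZMod p, f x * conj (f x) := by
          rw [← Finset.sum_mul]
          field_simp
  have cast1 : ((∑ z : ZMod p, ‖ft p f z‖ ^ 2 : ℝ) : ℂ)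
      = ∑ z : ZMod p, ft p f z * conj (ft p f z) := by
    push_cast
    refine Finset.sum_congr rfl fun z _ => ?_
    rw [Complex.mul_conj]
    norm_cast
    rw [Complex.sq_norm]
  have cast2 : (((1 / (p : ℝ)) * ∑ x : ZMod p, ‖f x‖ ^ 2 : ℝ) : ℂ)
      = (1 / (p : ℂ)) * ∑ x : ZMod p, f x * conj (f x) := by
    push_cast
    congr 1
    refine Finset.sum_congr rfl fun x _ => ?_
    rw [Complex.mul_conj]
    norm_cast
    rw [Complex.sq_norm]
  have hreal : ∑ z : ZMod p, ‖ft p f z‖ ^ 2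
      = (1 / (p : ℝ)) * ∑ x : ZMod p, ‖f x‖ ^ 2 := by
    have := cast1.trans (key.trans cast2.symm)
    exact_mod_cast this
  rw [hreal, nrm2, Real.sq_sqrt]
  positivity

/-! ### Helper lemmas -/

lemma sum_translate' {M : Type*} [AddCommMonoid M] (F : ZMod p → M) (x : ZMod p) :
    ∑ u : ZMod p, F (x + u) = ∑ z : ZMod p, F z :=
  Fintype.sum_equiv (Equiv.addLeft x) _ _ (fun _ => rfl)

lemma sum_subleft' {M : Type*} [AddCommMonoid M] (F : ZMod p → M) (s : ZMod p) :
    ∑ x : ZMod p, F (s - x) = ∑ z : ZMod p, F z :=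
  Fintype.sum_equiv (Equiv.subLeft s) _ _ (fun _ => rfl)

end aux

lemma cs_abs {ι : Type*} [Fintype ι] (f g : ι → ℂ) :
    ‖∑ i : ι, f i * g i‖ ^ 2
      ≤ (∑ i : ι, ‖f i‖ ^ 2) * (∑ i : ι, ‖g i‖ ^ 2) := by
  have h1 : ‖∑ i : ι, f i * g i‖
      ≤ ∑ i : ι, ‖f i‖ * ‖g i‖ := by
    refine (norm_sum_le _ _).trans (le_of_eq ?_)
    exact Finset.sum_congr rfl fun i _ => norm_mul _ _
  calc ‖∑ i : ι, f i * g i‖ ^ 2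
      ≤ (∑ i : ι, ‖f i‖ * ‖g i‖) ^ 2 :=
        pow_le_pow_left₀ (norm_nonneg _) h1 2
    _ ≤ _ := Finset.sum_mul_sq_le_sq_mul_sq _ _ _

/-! ### Main objects -/

noncomputable def g2 (p : ℕ) [NeZero p] (f₂ : ZMod p → ℂ) (y : ZMod p) : ℂ :=
  if y = 0 then 0 else ft p f₂ y

noncomputable def TT (p : ℕ) [NeZero p] (K : ZMod p → ZMod p → ℂ)
    (f₁ f₂ : ZMod p → ℂ) (s : ZMod p) : ℂ :=
  ∑ x : ZMod p, ft p f₁ x * g2 p f₂ (s - x) * K x (s - x)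

noncomputable def Aq (p : ℕ) [NeZero p] (K : ZMod p → ZMod p → ℂ)
    (f₁ f₂ : ZMod p → ℂ) (x y : ZMod p) : ℂ :=
  ft p f₁ x * K x y * conj (TT p K f₁ f₂ (x + y))

noncomputable def Phi (p : ℕ) [NeZero p] (K : ZMod p → ZMod p → ℂ)
    (f₁ f₂ : ZMod p → ℂ) (y : ZMod p) : ℂ :=
  ∑ x : ZMod p, Aq p K f₁ f₂ x y

noncomputable def Bq (p : ℕ) [NeZero p] (K : ZMod p → ZMod p → ℂ)
    (f₁ f₂ : ZMod p → ℂ) (x u s : ZMod p) : ℂ :=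
  K x (s - x) * conj (K (x + u) (s - x)) * conj (TT p K f₁ f₂ s) * TT p K f₁ f₂ (s + u)

noncomputable def Wf (p : ℕ) [NeZero p] (K : ZMod p → ZMod p → ℂ)
    (f₁ f₂ : ZMod p → ℂ) (x u : ZMod p) : ℂ :=
  ∑ s : ZMod p, Bq p K f₁ f₂ x u s

noncomputable def Pq (p : ℕ) [NeZero p] (K : ZMod p → ZMod p → ℂ) (s u v : ZMod p) : ℂ :=
  ∑ x : ZMod p,
    K x (s - x) * star (K (x + u) (s - x)) * star (K x (s + v - x)) * K (x + u) (s + v - x)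

section main
variable (p : ℕ) [NeZero p] (K : ZMod p → ZMod p → ℂ) (f₁ f₂ : ZMod p → ℂ)

lemma T_eq (s : ZMod p) :
    (∑ n ∈ Finset.univ.filter (fun n : ZMod p => n ≠ 0),
      ft p f₁ (s - n) * ft p f₂ n * K (s - n) n) = TT p K f₁ f₂ s := by
  have h1 : TT p K f₁ f₂ s
      = ∑ n : ZMod p, ft p f₁ (s - n) * g2 p f₂ n * K (s - n) n := by
    rw [TT]
    refine (Fintype.sum_equiv (Equiv.subLeft s) _ _ fun n => ?_).symm
    simp only [Equiv.subLeft_apply, sub_sub_cancel]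
  rw [h1, Finset.sum_filter]
  refine Finset.sum_congr rfl fun n _ => ?_
  by_cases hn : n = 0
  · simp [hn, g2]
  · simp [hn, g2]

lemma claim1 :
    ∑ y : ZMod p, g2 p f₂ y * Phi p K f₁ f₂ y
      = ∑ s : ZMod p, TT p K f₁ f₂ s * conj (TT p K f₁ f₂ s) := by
  calc ∑ y : ZMod p, g2 p f₂ y * Phi p K f₁ f₂ y
      = ∑ y : ZMod p, ∑ x : ZMod p, g2 p f₂ y * Aq p K f₁ f₂ x y := by
        simp only [Phi, Finset.mul_sum]
    _ = ∑ x : ZMod p, ∑ y : ZMod p, g2 p f₂ y * Aq p K f₁ f₂ x y := Finset.sum_comm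
    _ = ∑ x : ZMod p, ∑ s : ZMod p, g2 p f₂ (s - x)
          * (ft p f₁ x * K x (s - x) * conj (TT p K f₁ f₂ s)) := by
        refine Finset.sum_congr rfl fun x _ => ?_
        refine (Fintype.sum_equiv (Equiv.subRight x) _ _ fun s => ?_).symm
        simp only [Equiv.subRight_apply, Aq]
        have h : x + (s - x) = s := by ring
        rw [h]
    _ = ∑ s : ZMod p, ∑ x : ZMod p, g2 p f₂ (s - x)
          * (ft p f₁ x * K x (s - x) * conj (TT p K f₁ f₂ s)) := Finset.sum_comm
    _ = ∑ s : ZMod p, TT p K f₁ f₂ s * conj (TT p K f₁ f₂ s) := by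
        refine Finset.sum_congr rfl fun s _ => ?_
        rw [TT, Finset.sum_mul]
        exact Finset.sum_congr rfl fun x _ => by ring

lemma claim2 :
    ∑ q : ZMod p × ZMod p,
      (ft p f₁ q.1 * conj (ft p f₁ (q.1 + q.2))) * Wf p K f₁ f₂ q.1 q.2
      = ∑ y : ZMod p, Phi p K f₁ f₂ y * conj (Phi p K f₁ f₂ y) := by
  have hinner : ∀ x u : ZMod p,
      ∑ y : ZMod p, Aq p K f₁ f₂ x y * conj (Aq p K f₁ f₂ (x + u) y)
        = (ft p f₁ x * conj (ft p f₁ (x + u))) * Wf p K f₁ f₂ x u := by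
    intro x u
    rw [Wf, Finset.mul_sum]
    refine (Fintype.sum_equiv (Equiv.subRight x) _ _ fun s => ?_).symm
    simp only [Equiv.subRight_apply, Aq, Bq]
    have h1 : x + (s - x) = s := by ring
    have h2 : x + u + (s - x) = s + u := by ring
    rw [h1, h2]
    simp only [map_mul, Complex.conj_conj]
    ring
  calc ∑ q : ZMod p × ZMod p,
        (ft p f₁ q.1 * conj (ft p f₁ (q.1 + q.2))) * Wf p K f₁ f₂ q.1 q.2
      = ∑ x : ZMod p, ∑ u : ZMod p,
          (ft p f₁ x * conj (ft p f₁ (x + u))) * Wf p K f₁ f₂ x u := by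
        rw [Fintype.sum_prod_type]
    _ = ∑ x : ZMod p, ∑ u : ZMod p,
          ∑ y : ZMod p, Aq p K f₁ f₂ x y * conj (Aq p K f₁ f₂ (x + u) y) := by
        exact Finset.sum_congr rfl fun x _ => Finset.sum_congr rfl fun u _ =>
          (hinner x u).symm
    _ = ∑ x : ZMod p, ∑ y : ZMod p,
          ∑ u : ZMod p, Aq p K f₁ f₂ x y * conj (Aq p K f₁ f₂ (x + u) y) := by
        exact Finset.sum_congr rfl fun x _ => Finset.sum_comm
    _ = ∑ y : ZMod p, ∑ x : ZMod p,
          ∑ u : ZMod p, Aq p K f₁ f₂ x y * conj (Aq p K f₁ f₂ (x + u) y) :=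
        Finset.sum_comm
    _ = ∑ y : ZMod p, Phi p K f₁ f₂ y * conj (Phi p K f₁ f₂ y) := by
        refine Finset.sum_congr rfl fun y _ => ?_
        rw [Phi, map_sum, Finset.sum_mul_sum]
        refine Finset.sum_congr rfl fun x _ => ?_
        exact Fintype.sum_equiv (Equiv.addLeft x)
          (fun u => Aq p K f₁ f₂ x y * conj (Aq p K f₁ f₂ (x + u) y))
          (fun x' => Aq p K f₁ f₂ x y * conj (Aq p K f₁ f₂ x' y)) (fun u => rfl)

lemma claim3 :
    ∑ r : ZMod p × ZMod p × ZMod p,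
      Pq p K r.1 r.2.1 r.2.2 *
        (conj (TT p K f₁ f₂ r.1) * TT p K f₁ f₂ (r.1 + r.2.1)
          * TT p K f₁ f₂ (r.1 + r.2.2) * conj (TT p K f₁ f₂ (r.1 + r.2.1 + r.2.2)))
      = ∑ q : ZMod p × ZMod p, Wf p K f₁ f₂ q.1 q.2 * conj (Wf p K f₁ f₂ q.1 q.2) := by
  have hpt : ∀ x u s v : ZMod p,
      Bq p K f₁ f₂ x u s * conj (Bq p K f₁ f₂ x u (s + v))
        = (K x (s - x) * star (K (x + u) (s - x)) * star (K x (s + v - x))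
            * K (x + u) (s + v - x)) *
          (conj (TT p K f₁ f₂ s) * TT p K f₁ f₂ (s + u)
            * TT p K f₁ f₂ (s + v) * conj (TT p K f₁ f₂ (s + u + v))) := by
    intro x u s v
    simp only [Bq, map_mul, Complex.conj_conj]
    have h2 : s + v + u = s + u + v := by ring
    rw [h2]
    simp only [starRingEnd_apply]
    ring
  calc ∑ r : ZMod p × ZMod p × ZMod p,
        Pq p K r.1 r.2.1 r.2.2 *
          (conj (TT p K f₁ f₂ r.1) * TT p K f₁ f₂ (r.1 + r.2.1)
            * TT p K f₁ f₂ (r.1 + r.2.2) * conj (TT p K f₁ f₂ (r.1 + r.2.1 + r.2.2)))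
      = ∑ s : ZMod p, ∑ u : ZMod p, ∑ v : ZMod p,
          Pq p K s u v *
            (conj (TT p K f₁ f₂ s) * TT p K f₁ f₂ (s + u)
              * TT p K f₁ f₂ (s + v) * conj (TT p K f₁ f₂ (s + u + v))) := by
        rw [Fintype.sum_prod_type]
        exact Finset.sum_congr rfl fun s _ => by rw [Fintype.sum_prod_type]
    _ = ∑ s : ZMod p, ∑ u : ZMod p, ∑ v : ZMod p, ∑ x : ZMod p,
          Bq p K f₁ f₂ x u s * conj (Bq p K f₁ f₂ x u (s + v)) := by
        refine Finset.sum_congr rfl fun s _ => Finset.sum_congr rfl fun u _ =>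
          Finset.sum_congr rfl fun v _ => ?_
        rw [Pq, Finset.sum_mul]
        exact Finset.sum_congr rfl fun x _ => (hpt x u s v).symm
    _ = ∑ s : ZMod p, ∑ u : ZMod p, ∑ x : ZMod p, ∑ v : ZMod p,
          Bq p K f₁ f₂ x u s * conj (Bq p K f₁ f₂ x u (s + v)) := by
        exact Finset.sum_congr rfl fun s _ => Finset.sum_congr rfl fun u _ =>
          Finset.sum_comm
    _ = ∑ s : ZMod p, ∑ x : ZMod p, ∑ u : ZMod p, ∑ v : ZMod p,
          Bq p K f₁ f₂ x u s * conj (Bq p K f₁ f₂ x u (s + v)) := by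
        exact Finset.sum_congr rfl fun s _ => Finset.sum_comm
    _ = ∑ x : ZMod p, ∑ s : ZMod p, ∑ u : ZMod p, ∑ v : ZMod p,
          Bq p K f₁ f₂ x u s * conj (Bq p K f₁ f₂ x u (s + v)) := Finset.sum_comm
    _ = ∑ x : ZMod p, ∑ u : ZMod p, ∑ s : ZMod p, ∑ v : ZMod p,
          Bq p K f₁ f₂ x u s * conj (Bq p K f₁ f₂ x u (s + v)) := by
        exact Finset.sum_congr rfl fun x _ => Finset.sum_comm
    _ = ∑ q : ZMod p × ZMod p, Wf p K f₁ f₂ q.1 q.2 * conj (Wf p K f₁ f₂ q.1 q.2) := by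
        rw [Fintype.sum_prod_type]
        refine Finset.sum_congr rfl fun x _ => Finset.sum_congr rfl fun u _ => ?_
        rw [Wf, map_sum, Finset.sum_mul_sum]
        refine Finset.sum_congr rfl fun s _ => ?_
        exact Fintype.sum_equiv (Equiv.addLeft s)
          (fun v => Bq p K f₁ f₂ x u s * conj (Bq p K f₁ f₂ x u (s + v)))
          (fun s' => Bq p K f₁ f₂ x u s * conj (Bq p K f₁ f₂ x u s')) (fun v => rfl)

lemma claim4 :
    ∑ r : ZMod p × ZMod p × ZMod p,
        ‖TT p K f₁ f₂ r.1‖ ^ 2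
      * ‖TT p K f₁ f₂ (r.1 + r.2.1)‖ ^ 2
      * ‖TT p K f₁ f₂ (r.1 + r.2.2)‖ ^ 2
      * ‖TT p K f₁ f₂ (r.1 + r.2.1 + r.2.2)‖ ^ 2
      = ∑ u : ZMod p, (∑ s : ZMod p,
          ‖TT p K f₁ f₂ s‖ ^ 2 * ‖TT p K f₁ f₂ (s + u)‖ ^ 2) ^ 2 := by
  set a : ZMod p → ℝ := fun t => ‖TT p K f₁ f₂ t‖ ^ 2 with ha
  calc ∑ r : ZMod p × ZMod p × ZMod p,
        a r.1 * a (r.1 + r.2.1) * a (r.1 + r.2.2) * a (r.1 + r.2.1 + r.2.2)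
      = ∑ s : ZMod p, ∑ u : ZMod p, ∑ v : ZMod p, a s * a (s+u) * a (s+v) * a (s+u+v) := by
        rw [Fintype.sum_prod_type]
        exact Finset.sum_congr rfl fun s _ => by rw [Fintype.sum_prod_type]
    _ = ∑ u : ZMod p, ∑ s : ZMod p, ∑ v : ZMod p, a s * a (s+u) * a (s+v) * a (s+u+v) :=
        Finset.sum_comm
    _ = ∑ u : ZMod p, (∑ s : ZMod p, a s * a (s+u)) ^ 2 := by
        refine Finset.sum_congr rfl fun u _ => ?_
        calc ∑ s : ZMod p, ∑ v : ZMod p, a s * a (s+u) * a (s+v) * a (s+u+v)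
            = ∑ s : ZMod p, (a s * a (s+u)) * ∑ v : ZMod p, (a (s+v) * a ((s+v)+u)) := by
              refine Finset.sum_congr rfl fun s _ => ?_
              rw [Finset.mul_sum]
              refine Finset.sum_congr rfl fun v _ => ?_
              have h : s + u + v = s + v + u := by ring
              rw [h]; ring
          _ = ∑ s : ZMod p, (a s * a (s+u)) * ∑ w : ZMod p, (a w * a (w+u)) := by
              refine Finset.sum_congr rfl fun s _ => ?_
              congr 1
              exact sum_translate' p (fun w => a w * a (w+u)) s
          _ = (∑ s : ZMod p, a s * a (s+u)) * ∑ w : ZMod p, a w * a (w+u) := by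
              rw [← Finset.sum_mul]
          _ = (∑ s : ZMod p, a s * a (s+u)) ^ 2 := by ring

lemma T_bound (hK : ∀ x y, ‖K x y‖ ≤ 1) (s : ZMod p) :
    ‖TT p K f₁ f₂ s‖ ^ 2
      ≤ (∑ z : ZMod p, ‖ft p f₁ z‖ ^ 2)
        * (∑ z : ZMod p, ‖g2 p f₂ z‖ ^ 2) := by
  have h1 : ‖TT p K f₁ f₂ s‖
      ≤ ∑ x : ZMod p, ‖ft p f₁ x‖ * ‖g2 p f₂ (s - x)‖ := by
    refine (norm_sum_le _ _).trans ?_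
    refine Finset.sum_le_sum fun x _ => ?_
    rw [norm_mul, norm_mul]
    calc ‖ft p f₁ x‖ * ‖g2 p f₂ (s-x)‖ * ‖K x (s-x)‖
        ≤ ‖ft p f₁ x‖ * ‖g2 p f₂ (s-x)‖ * 1 := by
          refine mul_le_mul_of_nonneg_left (hK _ _) ?_
          positivity
      _ = _ := by rw [mul_one]
  calc ‖TT p K f₁ f₂ s‖ ^ 2
      ≤ (∑ x : ZMod p, ‖ft p f₁ x‖ * ‖g2 p f₂ (s - x)‖) ^ 2 :=
        pow_le_pow_left₀ (norm_nonneg _) h1 2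
    _ ≤ (∑ x : ZMod p, ‖ft p f₁ x‖ ^ 2)
          * (∑ x : ZMod p, ‖g2 p f₂ (s - x)‖ ^ 2) :=
        Finset.sum_mul_sq_le_sq_mul_sq _ _ _
    _ = _ := by
        congr 1
        exact sum_subleft' p (fun z => ‖g2 p f₂ z‖ ^ 2) s

end main

set_option maxHeartbeats 2000000 in
theorem stmt6 : ∃ c : ℝ, 0 < c ∧ ∀ (p : ℕ) [NeZero p], p.Prime →
    ∀ K : ZMod p → ZMod p → ℂ, (∀ x y, ‖K x y‖ ≤ 1) →
    ∀ f₁ f₂ : ZMod p → ℂ,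
    (∑ s : ZMod p, ‖∑ n ∈ Finset.univ.filter (fun n : ZMod p => n ≠ 0),
        ft p f₁ (s - n) * ft p f₂ n * K (s - n) n‖ ^ 2) ^ ((1 : ℝ) / 2) ≤
      c * bigOmega p K ^ ((1 : ℝ) / 5) * nrm2 p f₁ * nrm2 p f₂ := by
  refine ⟨1, one_pos, ?_⟩
  intro p _ hp K hK f₁ f₂
  -- notation
  set σ : ℝ := ∑ s : ZMod p, ‖TT p K f₁ f₂ s‖ ^ 2 with hσdef
  set G₁ : ℝ := ∑ z : ZMod p, ‖ft p f₁ z‖ ^ 2 with hG₁def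
  set G₂ : ℝ := ∑ z : ZMod p, ‖g2 p f₂ z‖ ^ 2 with hG₂def
  set ρ : ℝ := ∑ y : ZMod p, ‖Phi p K f₁ f₂ y‖ ^ 2 with hρdef
  set β : ℝ := ∑ q : ZMod p × ZMod p, ‖Wf p K f₁ f₂ q.1 q.2‖ ^ 2 with hβdef
  set Ωr : ℝ := ∑ s : ZMod p, ∑ u : ZMod p, ∑ v : ZMod p,
      ‖Pq p K s u v‖ ^ 2 with hΩdef
  have σnn : 0 ≤ σ := Finset.sum_nonneg fun _ _ => by positivity
  have G₁nn : 0 ≤ G₁ := Finset.sum_nonneg fun _ _ => by positivity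
  have G₂nn : 0 ≤ G₂ := Finset.sum_nonneg fun _ _ => by positivity
  have ρnn : 0 ≤ ρ := Finset.sum_nonneg fun _ _ => by positivity
  have βnn : 0 ≤ β := Finset.sum_nonneg fun _ _ => by positivity
  have Ωnn : 0 ≤ Ωr := Finset.sum_nonneg fun _ _ =>
    Finset.sum_nonneg fun _ _ => Finset.sum_nonneg fun _ _ => by positivity
  -- rewrite the goal in terms of σ
  have hgoal : (∑ s : ZMod p, ‖∑ n ∈ Finset.univ.filter
        (fun n : ZMod p => n ≠ 0),
        ft p f₁ (s - n) * ft p f₂ n * K (s - n) n‖ ^ 2) = σ :=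
    Finset.sum_congr rfl fun s _ => by rw [T_eq]
  rw [hgoal]
  -- Step 1 : σ² ≤ G₂ρ
  have hcast1 : (σ : ℂ) = ∑ y : ZMod p, g2 p f₂ y * Phi p K f₁ f₂ y := by
    rw [claim1 p K f₁ f₂, hσdef]
    push_cast
    refine Finset.sum_congr rfl fun s _ => ?_
    rw [Complex.mul_conj]
    norm_cast
    rw [Complex.sq_norm]
  have h1 : σ ^ 2 ≤ G₂ * ρ := by
    have hcs := cs_abs (fun y => g2 p f₂ y) (fun y => Phi p K f₁ f₂ y)
    rw [← hcast1, Complex.norm_real, Real.norm_eq_abs, _root_.abs_of_nonneg σnn] at hcs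
    rw [hG₂def, hρdef]
    exact hcs
  -- Step 2 : ρ² ≤ G₁²β
  have hcast2 : (ρ : ℂ) = ∑ q : ZMod p × ZMod p,
      (ft p f₁ q.1 * conj (ft p f₁ (q.1 + q.2))) * Wf p K f₁ f₂ q.1 q.2 := by
    rw [claim2 p K f₁ f₂, hρdef]
    push_cast
    refine Finset.sum_congr rfl fun y _ => ?_
    rw [Complex.mul_conj]
    norm_cast
    rw [Complex.sq_norm]
  have hGsq : (∑ q : ZMod p × ZMod p,
      ‖ft p f₁ q.1 * conj (ft p f₁ (q.1 + q.2))‖ ^ 2) = G₁ ^ 2 := by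
    rw [Fintype.sum_prod_type]
    calc ∑ x : ZMod p, ∑ u : ZMod p,
          ‖ft p f₁ x * conj (ft p f₁ (x + u))‖ ^ 2
        = ∑ x : ZMod p, ‖ft p f₁ x‖ ^ 2 * G₁ := by
          refine Finset.sum_congr rfl fun x _ => ?_
          simp only [norm_mul, Complex.norm_conj, mul_pow]
          rw [← Finset.mul_sum]
          congr 1
          exact sum_translate' p (fun z => ‖ft p f₁ z‖ ^ 2) x
      _ = G₁ ^ 2 := by rw [← Finset.sum_mul]; ring
  have h2 : ρ ^ 2 ≤ G₁ ^ 2 * β := by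
    have hcs := cs_abs (fun q : ZMod p × ZMod p =>
        ft p f₁ q.1 * conj (ft p f₁ (q.1 + q.2)))
      (fun q : ZMod p × ZMod p => Wf p K f₁ f₂ q.1 q.2)
    rw [← hcast2, Complex.norm_real, Real.norm_eq_abs, _root_.abs_of_nonneg ρnn, hGsq] at hcs
    rw [hβdef]
    exact hcs
  -- Step 3 : β² ≤ Ωr · G₁G₂σ³
  have hcast3 : (β : ℂ) = ∑ r : ZMod p × ZMod p × ZMod p,
      Pq p K r.1 r.2.1 r.2.2 *
        (conj (TT p K f₁ f₂ r.1) * TT p K f₁ f₂ (r.1 + r.2.1)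
          * TT p K f₁ f₂ (r.1 + r.2.2) * conj (TT p K f₁ f₂ (r.1 + r.2.1 + r.2.2))) := by
    rw [claim3 p K f₁ f₂, hβdef]
    push_cast
    refine Finset.sum_congr rfl fun q _ => ?_
    rw [Complex.mul_conj]
    norm_cast
    rw [Complex.sq_norm]
  have hOmr : (∑ r : ZMod p × ZMod p × ZMod p,
      ‖Pq p K r.1 r.2.1 r.2.2‖ ^ 2) = Ωr := by
    rw [Fintype.sum_prod_type]
    exact Finset.sum_congr rfl fun s _ => by rw [Fintype.sum_prod_type]
  have hTquad : (∑ r : ZMod p × ZMod p × ZMod p,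
      ‖conj (TT p K f₁ f₂ r.1) * TT p K f₁ f₂ (r.1 + r.2.1)
        * TT p K f₁ f₂ (r.1 + r.2.2)
        * conj (TT p K f₁ f₂ (r.1 + r.2.1 + r.2.2))‖ ^ 2)
      = ∑ u : ZMod p, (∑ s : ZMod p, ‖TT p K f₁ f₂ s‖ ^ 2
          * ‖TT p K f₁ f₂ (s + u)‖ ^ 2) ^ 2 := by
    rw [← claim4 p K f₁ f₂]
    refine Finset.sum_congr rfl fun r _ => ?_
    simp only [norm_mul, Complex.norm_conj, mul_pow]
  have hTb : ∀ s : ZMod p, ‖TT p K f₁ f₂ s‖ ^ 2 ≤ G₁ * G₂ :=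
    fun s => T_bound p K f₁ f₂ hK s
  have hhu : ∀ u : ZMod p, (∑ s : ZMod p, ‖TT p K f₁ f₂ s‖ ^ 2
      * ‖TT p K f₁ f₂ (s + u)‖ ^ 2) ≤ (G₁ * G₂) * σ := by
    intro u
    calc ∑ s : ZMod p, ‖TT p K f₁ f₂ s‖ ^ 2
          * ‖TT p K f₁ f₂ (s + u)‖ ^ 2
        ≤ ∑ s : ZMod p, ‖TT p K f₁ f₂ s‖ ^ 2 * (G₁ * G₂) :=
          Finset.sum_le_sum fun s _ =>
            mul_le_mul_of_nonneg_left (hTb (s + u)) (by positivity)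
      _ = (G₁ * G₂) * σ := by rw [← Finset.sum_mul]; ring
  have hhnn : ∀ u : ZMod p, 0 ≤ (∑ s : ZMod p, ‖TT p K f₁ f₂ s‖ ^ 2
      * ‖TT p K f₁ f₂ (s + u)‖ ^ 2) :=
    fun u => Finset.sum_nonneg fun _ _ => by positivity
  have hsumh : (∑ u : ZMod p, ∑ s : ZMod p, ‖TT p K f₁ f₂ s‖ ^ 2
      * ‖TT p K f₁ f₂ (s + u)‖ ^ 2) = σ ^ 2 := by
    rw [Finset.sum_comm]
    calc ∑ s : ZMod p, ∑ u : ZMod p, ‖TT p K f₁ f₂ s‖ ^ 2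
          * ‖TT p K f₁ f₂ (s + u)‖ ^ 2
        = ∑ s : ZMod p, ‖TT p K f₁ f₂ s‖ ^ 2 * σ := by
          refine Finset.sum_congr rfl fun s _ => ?_
          rw [← Finset.mul_sum]
          congr 1
          exact sum_translate' p (fun z => ‖TT p K f₁ f₂ z‖ ^ 2) s
      _ = σ ^ 2 := by rw [← Finset.sum_mul]; ring
  have hhsq : (∑ u : ZMod p, (∑ s : ZMod p, ‖TT p K f₁ f₂ s‖ ^ 2
      * ‖TT p K f₁ f₂ (s + u)‖ ^ 2) ^ 2) ≤ ((G₁ * G₂) * σ) * σ ^ 2 := by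
    calc ∑ u : ZMod p, (∑ s : ZMod p, ‖TT p K f₁ f₂ s‖ ^ 2
          * ‖TT p K f₁ f₂ (s + u)‖ ^ 2) ^ 2
        ≤ ∑ u : ZMod p, ((G₁ * G₂) * σ) * (∑ s : ZMod p,
            ‖TT p K f₁ f₂ s‖ ^ 2
            * ‖TT p K f₁ f₂ (s + u)‖ ^ 2) := by
          refine Finset.sum_le_sum fun u _ => ?_
          rw [sq]
          exact mul_le_mul_of_nonneg_right (hhu u) (hhnn u)
      _ = ((G₁ * G₂) * σ) * σ ^ 2 := by rw [← Finset.mul_sum, hsumh]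
  have h3 : β ^ 2 ≤ Ωr * (((G₁ * G₂) * σ) * σ ^ 2) := by
    have hcs := cs_abs (fun r : ZMod p × ZMod p × ZMod p => Pq p K r.1 r.2.1 r.2.2)
      (fun r : ZMod p × ZMod p × ZMod p =>
        conj (TT p K f₁ f₂ r.1) * TT p K f₁ f₂ (r.1 + r.2.1)
          * TT p K f₁ f₂ (r.1 + r.2.2) * conj (TT p K f₁ f₂ (r.1 + r.2.1 + r.2.2)))
    rw [← hcast3, Complex.norm_real, Real.norm_eq_abs, _root_.abs_of_nonneg βnn, hOmr, hTquad] at hcs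
    exact hcs.trans (mul_le_mul_of_nonneg_left hhsq Ωnn)
  -- Combine : σ⁵ ≤ G₁⁵G₂⁵Ωr
  have hmain : σ ^ 8 ≤ (G₁ ^ 5 * G₂ ^ 5 * Ωr) * σ ^ 3 := by
    calc σ ^ 8 = (σ ^ 2) ^ 4 := by ring
      _ ≤ (G₂ * ρ) ^ 4 := pow_le_pow_left₀ (sq_nonneg σ) h1 4
      _ = G₂ ^ 4 * (ρ ^ 2) ^ 2 := by ring
      _ ≤ G₂ ^ 4 * (G₁ ^ 2 * β) ^ 2 :=
          mul_le_mul_of_nonneg_left (pow_le_pow_left₀ (sq_nonneg ρ) h2 2)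
            (by positivity)
      _ = (G₂ ^ 4 * G₁ ^ 4) * β ^ 2 := by ring
      _ ≤ (G₂ ^ 4 * G₁ ^ 4) * (Ωr * (((G₁ * G₂) * σ) * σ ^ 2)) :=
          mul_le_mul_of_nonneg_left h3 (by positivity)
      _ = (G₁ ^ 5 * G₂ ^ 5 * Ωr) * σ ^ 3 := by ring
  have hRHSnn : 0 ≤ G₁ ^ 5 * G₂ ^ 5 * Ωr :=
    mul_nonneg (mul_nonneg (pow_nonneg G₁nn 5) (pow_nonneg G₂nn 5)) Ωnn
  have h5 : σ ^ 5 ≤ G₁ ^ 5 * G₂ ^ 5 * Ωr := by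
    rcases eq_or_lt_of_le σnn with h0 | h0
    · rw [← h0]
      simpa using hRHSnn
    · refine le_of_mul_le_mul_right ?_ (pow_pos h0 3)
      calc σ ^ 5 * σ ^ 3 = σ ^ 8 := by ring
        _ ≤ (G₁ ^ 5 * G₂ ^ 5 * Ωr) * σ ^ 3 := hmain
  -- Final : pass to fractional powers
  have hOmega : bigOmega p K = Ωr ^ ((1:ℝ) / 2) := by rw [hΩdef]; rfl
  have hG₁ : G₁ = nrm2 p f₁ ^ 2 := parseval p hp f₁
  have hG₂le : G₂ ≤ nrm2 p f₂ ^ 2 := by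
    rw [hG₂def, ← parseval p hp f₂]
    refine Finset.sum_le_sum fun z _ => ?_
    by_cases hz : z = 0
    · have hg : g2 p f₂ z = 0 := by simp [g2, hz]
      rw [hg, norm_zero]
      have : (0:ℝ) ^ 2 = 0 := by norm_num
      rw [this]
      positivity
    · simp [g2, hz]
  have n1nn : 0 ≤ nrm2 p f₁ := Real.sqrt_nonneg _
  have n2nn : 0 ≤ nrm2 p f₂ := Real.sqrt_nonneg _
  have hmidnn : 0 ≤ (nrm2 p f₁ ^ 2) ^ 5 * (nrm2 p f₂ ^ 2) ^ 5 * Ωr :=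
    mul_nonneg (mul_nonneg (pow_nonneg (sq_nonneg _) 5) (pow_nonneg (sq_nonneg _) 5)) Ωnn
  have epow : ∀ t : ℝ, 0 ≤ t → ((t ^ 2) ^ 5 : ℝ) ^ ((1:ℝ) / 10) = t := by
    intro t ht
    rw [show ((t ^ 2) ^ 5 : ℝ) = t ^ (10 : ℕ) by ring,
      ← Real.rpow_natCast t 10, ← Real.rpow_mul ht]
    norm_num
  calc σ ^ ((1:ℝ) / 2) = (σ ^ 5) ^ ((1:ℝ) / 10) := by
        rw [← Real.rpow_natCast σ 5, ← Real.rpow_mul σnn]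
        norm_num
    _ ≤ (G₁ ^ 5 * G₂ ^ 5 * Ωr) ^ ((1:ℝ) / 10) :=
        Real.rpow_le_rpow (pow_nonneg σnn 5) h5 (by norm_num)
    _ ≤ ((nrm2 p f₁ ^ 2) ^ 5 * (nrm2 p f₂ ^ 2) ^ 5 * Ωr) ^ ((1:ℝ) / 10) := by
        refine Real.rpow_le_rpow hRHSnn ?_ (by norm_num)
        rw [hG₁]
        refine mul_le_mul_of_nonneg_right ?_ Ωnn
        exact mul_le_mul_of_nonneg_left (pow_le_pow_left₀ G₂nn hG₂le 5)
          (pow_nonneg (sq_nonneg _) 5)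
    _ = nrm2 p f₁ * nrm2 p f₂ * Ωr ^ ((1:ℝ) / 10) := by
        rw [Real.mul_rpow (mul_nonneg (pow_nonneg (sq_nonneg _) 5)
            (pow_nonneg (sq_nonneg _) 5)) Ωnn,
          Real.mul_rpow (pow_nonneg (sq_nonneg _) 5) (pow_nonneg (sq_nonneg _) 5),
          epow _ n1nn, epow _ n2nn]
    _ = 1 * bigOmega p K ^ ((1:ℝ) / 5) * nrm2 p f₁ * nrm2 p f₂ := by
        rw [hOmega, ← Real.rpow_mul Ωnn]
        norm_num
        ring
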